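/- Under the SISO discrete-time adaptive law setup with |k_p| · xᵀ Γ x < 2 xᵀ x for all nonzero x ∈ ℝ^N, the parameter increments are square-summable: ∑_{t=0}^{∞} ‖θ(t+1) − θ(t)‖² < ∞ and ∑_{t=0}^{∞} (ρ(t+1) − ρ(t))² < ∞ (i.e. θ(t+1) − θ(t) ∈ L² and ρ(t+1) − ρ(t) ∈ L²). -/

import Mathlib

open Matrix BigOperators

private lemma quad_expand {N : ℕ} (A : Matrix (Fin N) (Fin N) ℝ) (hA : Aᵀ = A)
    (x w : Fin N → ℝ) (r : ℝ) :
    (x - r • w) ⬝ᵥ A.mulVec (x - r • w)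
      = x ⬝ᵥ A.mulVec x - 2*r*(x ⬝ᵥ A.mulVec w) + r^2 * (w ⬝ᵥ A.mulVec w) := by
  have hsymm : w ⬝ᵥ A.mulVec x = x ⬝ᵥ A.mulVec w := by
    rw [Matrix.dotProduct_mulVec, ← Matrix.vecMul_transpose, hA, dotProduct_comm]
  simp only [Matrix.mulVec_sub, Matrix.mulVec_smul, sub_dotProduct,
    dotProduct_sub, smul_dotProduct, dotProduct_smul, smul_eq_mul, hsymm]
  ring

set_option maxHeartbeats 2000000

/-- SISO discrete-time adaptive law (Lemma 2.1): under `Γ < (2/|k_p|) I`,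
the parameter increments `θ(t+1) − θ(t)` and `ρ(t+1) − ρ(t)` are square-summable. -/
theorem siso_discrete_adaptive_law_increments_L2
    (N : ℕ) (hN : 0 < N)
    (ζ : ℕ → Fin N → ℝ) (ξ : ℕ → ℝ)
    (kp : ℝ) (hkp : kp ≠ 0)
    (θs : Fin N → ℝ)
    (Γ : Matrix (Fin N) (Fin N) ℝ) (hΓ : Γ.PosDef)
    (hΓ2 : ∀ x : Fin N → ℝ, x ≠ 0 →
      |kp| * (∑ i, x i * (Γ.mulVec x) i) < 2 * ∑ i, x i * x i)
    (γ : ℝ) (hγ1 : 0 < γ) (hγ2 : γ < 2)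
    (θ : ℕ → Fin N → ℝ) (ρ : ℕ → ℝ)
    (m ε : ℕ → ℝ)
    (hm : ∀ t, m t = Real.sqrt (1 + (∑ i, ζ t i * ζ t i) + ξ t ^ 2))
    (hε : ∀ t, ε t = kp * (∑ i, (θ t i - θs i) * ζ t i) + (ρ t - kp) * ξ t)
    (hθ : ∀ t, θ (t + 1) = θ t - (Real.sign kp * ε t / m t ^ 2) • Γ.mulVec (ζ t))
    (hρ : ∀ t, ρ (t + 1) = ρ t - γ * ξ t * ε t / m t ^ 2) :
    Summable (fun t => ∑ i, (θ (t + 1) i - θ t i) ^ 2) ∧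
    Summable (fun t => (ρ (t + 1) - ρ t) ^ 2) := by
  classical
  have hdot : ∀ x y : Fin N → ℝ, (∑ i, x i * y i) = x ⬝ᵥ y := fun _ _ => rfl
  -- m facts
  have hm2 : ∀ t, m t ^ 2 = 1 + (∑ i, ζ t i * ζ t i) + ξ t ^ 2 := by
    intro t
    have h0 : (0:ℝ) ≤ ∑ i, ζ t i * ζ t i := Finset.sum_nonneg fun i _ => mul_self_nonneg _
    have h1 : (0:ℝ) ≤ 1 + (∑ i, ζ t i * ζ t i) + ξ t ^ 2 := by nlinarith [sq_nonneg (ξ t)]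
    rw [hm t, Real.sq_sqrt h1]
  have hζnn : ∀ t, (0:ℝ) ≤ ∑ i, ζ t i * ζ t i := fun t =>
    Finset.sum_nonneg fun i _ => mul_self_nonneg _
  have hmpos : ∀ t, 0 < m t ^ 2 := by
    intro t; rw [hm2 t]; nlinarith [hζnn t, sq_nonneg (ξ t)]
  -- sign facts
  set s := Real.sign kp with hs
  have hs1 : |kp| * s = kp := by
    rcases hkp.lt_or_gt with h | h
    · rw [hs, Real.sign_of_neg h, abs_of_neg h]; ring
    · rw [hs, Real.sign_of_pos h, abs_of_pos h]; ring
  have hs2 : s ^ 2 = 1 := by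
    rcases hkp.lt_or_gt with h | h
    · rw [hs, Real.sign_of_neg h]; norm_num
    · rw [hs, Real.sign_of_pos h]; norm_num
  -- matrix facts
  set A := Γ⁻¹ with hAdef
  have hdet : IsUnit Γ.det := isUnit_iff_ne_zero.mpr hΓ.det_pos.ne'
  have hAG : A * Γ = 1 := Matrix.nonsing_inv_mul Γ hdet
  have hApd : A.PosDef := hΓ.inv
  have hAsym : Aᵀ = A := by have h : A.IsSymm := (by simpa using hApd.1); exact h
  have hAw : ∀ v : Fin N → ℝ, A.mulVec (Γ.mulVec v) = v := fun v => by
    rw [Matrix.mulVec_mulVec, hAG, Matrix.one_mulVec]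
  have hAnn : ∀ x : Fin N → ℝ, 0 ≤ x ⬝ᵥ A.mulVec x := by
    intro x
    by_cases hx : x = 0
    · simp [hx]
    · have := hApd.dotProduct_mulVec_pos hx; simpa using this.le
  -- uniform bound via compactness
  haveI : Nonempty (Fin N) := ⟨⟨0, hN⟩⟩
  obtain ⟨c₀, hc₀2, hc₀⟩ : ∃ c₀ : ℝ, c₀ < 2 ∧ ∀ v : Fin N → ℝ,
      |kp| * (v ⬝ᵥ Γ.mulVec v) ≤ c₀ * (v ⬝ᵥ v) := by
    set f : (Fin N → ℝ) → ℝ := fun x => 2 * (x ⬝ᵥ x) - |kp| * (x ⬝ᵥ Γ.mulVec x) with hf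
    have hfc : Continuous f := by
      have h1 : Continuous fun x : Fin N → ℝ => x ⬝ᵥ x := by
        simp only [dotProduct]
        exact continuous_finset_sum _ fun i _ => (continuous_apply i).mul (continuous_apply i)
      have h2 : Continuous fun x : Fin N → ℝ => x ⬝ᵥ Γ.mulVec x := by
        simp only [dotProduct, Matrix.mulVec]
        exact continuous_finset_sum _ fun i _ => (continuous_apply i).mul
          (continuous_finset_sum _ fun j _ => continuous_const.mul (continuous_apply j))
      exact (continuous_const.mul h1).sub (continuous_const.mul h2)
    have hsph : IsCompact (Metric.sphere (0 : Fin N → ℝ) 1) := isCompact_sphere 0 1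
    have hne : (Metric.sphere (0 : Fin N → ℝ) 1).Nonempty := by
      refine ⟨fun _ => 1, ?_⟩
      simp [pi_norm_const]
    obtain ⟨x₀, hx₀s, hx₀min⟩ := hsph.exists_isMinOn hne hfc.continuousOn
    have hx₀n : ‖x₀‖ = 1 := by simpa using hx₀s
    have hδ : 0 < f x₀ := by
      have hx0 : x₀ ≠ 0 := by
        intro h; rw [h] at hx₀n; simp at hx₀n
      have h := hΓ2 x₀ hx0
      rw [hdot, hdot] at h
      simp only [hf]
      linarith
    have hscale : ∀ (r : ℝ) (x : Fin N → ℝ), f (r • x) = r^2 * f x := by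
      intro r x
      simp only [hf, Matrix.mulVec_smul, smul_dotProduct, dotProduct_smul,
        smul_eq_mul]
      ring
    refine ⟨2 - f x₀ / N, by
      have hNpos : (0:ℝ) < N := by exact_mod_cast hN
      have := div_pos hδ hNpos
      linarith, ?_⟩
    intro v
    by_cases hv : v = 0
    · simp [hv]
    · have hvn : 0 < ‖v‖ := norm_pos_iff.mpr hv
      have hNpos : (0:ℝ) < N := by exact_mod_cast hN
      have hu : (‖v‖⁻¹ • v) ∈ Metric.sphere (0 : Fin N → ℝ) 1 := by
        simp [norm_smul, abs_of_pos (inv_pos.mpr hvn), inv_mul_cancel₀ hvn.ne']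
      have hmin : f x₀ ≤ f (‖v‖⁻¹ • v) := hx₀min hu
      have hsc := hscale ‖v‖ (‖v‖⁻¹ • v)
      rw [smul_smul, mul_inv_cancel₀ hvn.ne', one_smul] at hsc
      -- hsc : f v = ‖v‖^2 * f (‖v‖⁻¹ • v)
      have hfv : ‖v‖^2 * f x₀ ≤ f v := by
        rw [hsc]
        exact mul_le_mul_of_nonneg_left hmin (sq_nonneg _)
      have hvv : v ⬝ᵥ v ≤ N * ‖v‖^2 := by
        rw [← hdot]
        calc ∑ i, v i * v i ≤ ∑ _i : Fin N, ‖v‖^2 := by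
              refine Finset.sum_le_sum fun i _ => ?_
              have h := norm_le_pi_norm v i
              have h2 : |v i| ≤ ‖v‖ := by simpa using h
              nlinarith [abs_nonneg (v i), sq_abs (v i)]
          _ = N * ‖v‖^2 := by rw [Finset.sum_const]; simp [mul_comm]
      -- f v = 2 (v⬝ᵥv) - |kp| (v⬝ᵥΓv) ≥ ‖v‖² f x₀ ≥ (f x₀ / N) (v⬝ᵥv)
      have hfv2 : 2 * (v ⬝ᵥ v) - |kp| * (v ⬝ᵥ Γ.mulVec v) = f v := by simp only [hf]
      have hkey : (f x₀ / N) * (v ⬝ᵥ v) ≤ ‖v‖^2 * f x₀ := by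
        rw [div_mul_eq_mul_div, div_le_iff₀ hNpos]
        nlinarith [hδ, hvv]
      nlinarith [hfv, hkey, hfv2]
  -- combined constant
  set c := max c₀ γ with hc
  have hc2 : c < 2 := max_lt hc₀2 hγ2
  have hcpos : 0 < c := lt_of_lt_of_le hγ1 (le_max_right _ _)
  -- Lyapunov function
  set φ : ℕ → Fin N → ℝ := fun t => θ t - θs with hφ
  set ψ : ℕ → ℝ := fun t => ρ t - kp with hψ
  set V : ℕ → ℝ := fun t => γ * |kp| * (φ t ⬝ᵥ A.mulVec (φ t)) + (ψ t)^2 with hV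
  set g : ℕ → ℝ := fun t => ε t ^ 2 / m t ^ 2 with hg
  have hVnn : ∀ t, 0 ≤ V t := by
    intro t
    have h1 := hAnn (φ t)
    simp only [hV]
    have h2 : 0 ≤ γ * |kp| := by positivity
    nlinarith [sq_nonneg (ψ t)]
  have hgnn : ∀ t, 0 ≤ g t := by
    intro t; simp only [hg]; positivity
  have hεφ : ∀ t, ε t = kp * (φ t ⬝ᵥ ζ t) + ψ t * ξ t := by
    intro t
    rw [hε t]
    rfl
  -- the key decrement inequality
  have hdec : ∀ t, V (t+1) + γ * (2 - c) * g t ≤ V t := by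
    intro t
    have hmne : (m t ^ 2) ≠ 0 := (hmpos t).ne'
    set a := ε t / m t ^ 2 with ha
    have hφ1 : φ (t+1) = φ t - (s * a) • (Γ.mulVec (ζ t)) := by
      have hcoef : Real.sign kp * ε t / m t ^ 2 = s * a := by rw [ha, ← hs]; ring
      simp only [hφ, hθ t, hcoef]
      funext i
      simp [Pi.sub_apply]
      ring
    have hψ1 : ψ (t+1) = ψ t - γ * ξ t * a := by
      simp only [hψ, hρ t, ha]; ring
    have hQ : φ (t+1) ⬝ᵥ A.mulVec (φ (t+1))
        = φ t ⬝ᵥ A.mulVec (φ t) - 2*(s*a)*(φ t ⬝ᵥ ζ t)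
          + a^2 * (ζ t ⬝ᵥ Γ.mulVec (ζ t)) := by
      rw [hφ1, quad_expand A hAsym, hAw, dotProduct_comm (Γ.mulVec (ζ t)) (ζ t),
        mul_pow, hs2, one_mul]
    have hVt1 : V (t+1) = V t - 2*γ*(ε t)*a
        + γ*a^2*(|kp| * (ζ t ⬝ᵥ Γ.mulVec (ζ t)) + γ * ξ t^2) := by
      simp only [hV]
      rw [hQ, hψ1, hεφ t]
      linear_combination (-(2*γ*a*(φ t ⬝ᵥ ζ t))) * hs1
    have hstuff : |kp| * (ζ t ⬝ᵥ Γ.mulVec (ζ t)) + γ * ξ t^2 ≤ c * m t ^ 2 := by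
      have h1 := hc₀ (ζ t)
      have h2 : ζ t ⬝ᵥ ζ t = ∑ i, ζ t i * ζ t i := rfl
      have h3 : (0:ℝ) ≤ ζ t ⬝ᵥ ζ t := by rw [h2]; exact hζnn t
      have h4 : c₀ ≤ c := le_max_left _ _
      have h5 : γ ≤ c := le_max_right _ _
      rw [hm2 t, ← h2]
      have hA' : |kp| * (ζ t ⬝ᵥ Γ.mulVec (ζ t)) ≤ c * (ζ t ⬝ᵥ ζ t) :=
        h1.trans (mul_le_mul_of_nonneg_right h4 h3)
      have hB' : γ * ξ t ^ 2 ≤ c * ξ t ^ 2 :=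
        mul_le_mul_of_nonneg_right h5 (sq_nonneg _)
      have h7 : c * (1 + (ζ t ⬝ᵥ ζ t) + ξ t ^ 2)
          = c + c * (ζ t ⬝ᵥ ζ t) + c * ξ t ^ 2 := by ring
      linarith [hcpos.le]
    have hεa : ε t * a = g t := by
      simp only [ha, hg]; field_simp
    have ha2 : a^2 * m t ^ 2 = g t := by
      simp only [ha, hg]; field_simp
    have key : γ*a^2*(|kp| * (ζ t ⬝ᵥ Γ.mulVec (ζ t)) + γ * ξ t^2) ≤ γ * (c * g t) := by
      have h1 : a^2*(|kp| * (ζ t ⬝ᵥ Γ.mulVec (ζ t)) + γ * ξ t^2) ≤ a^2*(c * m t ^2) :=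
        mul_le_mul_of_nonneg_left hstuff (sq_nonneg a)
      have h2 : a^2*(c * m t ^ 2) = c * g t := by linear_combination c * ha2
      calc γ*a^2*(|kp| * (ζ t ⬝ᵥ Γ.mulVec (ζ t)) + γ * ξ t^2)
          = γ*(a^2*(|kp| * (ζ t ⬝ᵥ Γ.mulVec (ζ t)) + γ * ξ t^2)) := by ring
        _ ≤ γ * (c * g t) := mul_le_mul_of_nonneg_left (h1.trans_eq h2) hγ1.le
    have h6 : 2*γ*(ε t)*a = 2*γ*g t := by rw [← hεa]; ring
    have h7 : γ*(2-c)*g t = 2*γ*g t - γ*(c*g t) := by ring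
    linarith [hVt1, key]
  -- summability of g
  have hpos2c : 0 < γ * (2 - c) := mul_pos hγ1 (by linarith)
  have hsum : Summable g := by
    apply summable_of_sum_range_le (c := V 0 / (γ*(2-c))) hgnn
    intro n
    have h1 : γ*(2-c) * ∑ t ∈ Finset.range n, g t ≤ V 0 := by
      rw [Finset.mul_sum]
      calc ∑ t ∈ Finset.range n, γ*(2-c)*g t
          ≤ ∑ t ∈ Finset.range n, (V t - V (t+1)) :=
            Finset.sum_le_sum fun t _ => by linarith [hdec t]
        _ = V 0 - V n := Finset.sum_range_sub' V n
        _ ≤ V 0 := by linarith [hVnn n]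
    rw [le_div_iff₀ hpos2c]
    linarith
  constructor
  · -- θ increments
    set CF : ℝ := ∑ i, ∑ j, (Γ i j)^2 with hCF
    have hCF0 : 0 ≤ CF := Finset.sum_nonneg fun i _ => Finset.sum_nonneg fun j _ => sq_nonneg _
    apply Summable.of_nonneg_of_le (fun t => Finset.sum_nonneg fun i _ => sq_nonneg _) ?_ (hsum.mul_left CF)
    intro t
    have hmne : (m t ^ 2) ≠ 0 := (hmpos t).ne'
    set K : ℝ := (s * ε t / m t ^ 2)^2 with hK
    have hK0 : 0 ≤ K := sq_nonneg _
    have hKm : K * m t ^ 2 = g t := by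
      simp only [hK, hg]
      field_simp
      linear_combination (ε t^2 / m t ^ 2) * hs2
    have hZ : (∑ j, ζ t j * ζ t j) ≤ m t ^ 2 := by
      rw [hm2 t]; linarith [sq_nonneg (ξ t)]
    have hZ0 : (0:ℝ) ≤ ∑ j, ζ t j * ζ t j := hζnn t
    have hW : (∑ i, ((Γ.mulVec (ζ t)) i)^2) ≤ CF * ∑ j, ζ t j * ζ t j := by
      rw [hCF, Finset.sum_mul]
      refine Finset.sum_le_sum fun i _ => ?_
      have := Finset.sum_mul_sq_le_sq_mul_sq Finset.univ (fun j => Γ i j) (ζ t)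
      calc ((Γ.mulVec (ζ t)) i)^2 = (∑ j, Γ i j * ζ t j)^2 := by rw [Matrix.mulVec]; rfl
        _ ≤ (∑ j, (Γ i j)^2) * ∑ j, (ζ t j)^2 := this
        _ = (∑ j, (Γ i j)^2) * ∑ j, ζ t j * ζ t j := by
            congr 1; exact Finset.sum_congr rfl fun j _ => (sq (ζ t j)) ▸ rfl
    have hW0 : (0:ℝ) ≤ ∑ i, ((Γ.mulVec (ζ t)) i)^2 := Finset.sum_nonneg fun i _ => sq_nonneg _
    have hS : ∑ i, (θ (t + 1) i - θ t i) ^ 2 = K * ∑ i, ((Γ.mulVec (ζ t)) i)^2 := by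
      rw [Finset.mul_sum]
      refine Finset.sum_congr rfl fun i _ => ?_
      have hdi : θ (t+1) i - θ t i = -(s * ε t / m t ^ 2) * (Γ.mulVec (ζ t)) i := by
        rw [hθ t]; simp only [Pi.sub_apply, Pi.smul_apply, smul_eq_mul]; ring
      rw [hdi, hK]; ring
    calc ∑ i, (θ (t + 1) i - θ t i) ^ 2 = K * ∑ i, ((Γ.mulVec (ζ t)) i)^2 := hS
      _ ≤ K * (CF * ∑ j, ζ t j * ζ t j) := mul_le_mul_of_nonneg_left hW hK0
      _ ≤ K * (CF * m t ^ 2) := by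
          exact mul_le_mul_of_nonneg_left (mul_le_mul_of_nonneg_left hZ hCF0) hK0
      _ = CF * (K * m t ^ 2) := by ring
      _ = CF * g t := by rw [hKm]
  · -- ρ increments
    apply Summable.of_nonneg_of_le (fun t => sq_nonneg _) ?_ (hsum.mul_left (γ^2))
    intro t
    have hmne : (m t ^ 2) ≠ 0 := (hmpos t).ne'
    have hξ : ξ t ^ 2 ≤ m t ^ 2 := by
      rw [hm2 t]
      linarith [hζnn t]
    have hd : ρ (t+1) - ρ t = -(γ * ξ t * ε t / m t ^ 2) := by rw [hρ t]; ring
    rw [hd]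
    have he : (-(γ * ξ t * ε t / m t ^ 2))^2 = γ^2 * (ξ t^2 / m t ^2) * g t := by
      simp only [hg]; ring
    rw [he]
    have h1 : ξ t^2 / m t ^2 ≤ 1 := (div_le_one (hmpos t)).mpr hξ
    calc γ^2 * (ξ t^2 / m t ^2) * g t ≤ γ^2 * 1 * g t :=
          mul_le_mul_of_nonneg_right (mul_le_mul_of_nonneg_left h1 (sq_nonneg γ)) (hgnn t)
      _ = γ^2 * g t := by ring
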